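/- Let L/F be a cyclic field extension of degree n with Galois group generated by σ, and let c₀ = (c₁,...,c_n) ∈ Lⁿ where c₁,...,c_n form an F-basis of L. Let C be the L-span of c₀, σ(c₀), ..., σ^{d−1}(c₀) for some d ≤ n, where σ acts coordinatewise. Then every nonzero element of C has rank weight at least n − d + 1; in particular, C is an MRD code of dimension d. -/

import Mathlib

open Finset Module Submodule

section Gabidulin

variable {F L : Type*} [Field F] [Field L] [Algebra F L]

/-- The `F`-linear operator `x ↦ ∑_{k<d} a k * σ^k x`. -/
noncomputable def Tmap (σ : L ≃ₐ[F] L) (a : ℕ → L) (d : ℕ) : L →ₗ[F] L :=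
  ∑ k ∈ Finset.range d, a k • (σ ^ k).toLinearMap

lemma Tmap_apply (σ : L ≃ₐ[F] L) (a : ℕ → L) (d : ℕ) (x : L) :
    Tmap σ a d x = ∑ k ∈ Finset.range d, a k * (σ ^ k) x := by
  simp [Tmap, smul_eq_mul]

lemma finrank_comap_le [FiniteDimensional F L] (D : L →ₗ[F] L) (W : Submodule F L) :
    finrank F (W.comap D) ≤ finrank F W + finrank F (LinearMap.ker D) := by
  set U := W.comap D with hU
  let f : U →ₗ[F] L := D.domRestrict U
  have h1 : finrank F (LinearMap.range f) + finrank F (LinearMap.ker f) = finrank F U :=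
    f.finrank_range_add_finrank_ker
  have h2 : finrank F (LinearMap.range f) ≤ finrank F W := by
    apply Submodule.finrank_mono
    rintro x ⟨u, rfl⟩
    exact u.2
  have h3 : finrank F (LinearMap.ker f) ≤ finrank F (LinearMap.ker D) := by
    refine LinearMap.finrank_le_finrank_of_injective
      (f := LinearMap.codRestrict (LinearMap.ker D)
        (U.subtype.comp (LinearMap.ker f).subtype) ?_) ?_
    · rintro ⟨z, hz⟩
      simpa [f, LinearMap.mem_ker] using hz
    · intro z w h
      have h1 := Subtype.ext_iff.1 h
      exact Subtype.ext (Subtype.ext h1)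
  omega

lemma kerA [FiniteDimensional F L] (σ : L ≃ₐ[F] L)
    (hfix : ∀ x : L, σ x = x → ∃ f : F, algebraMap F L f = x) :
    ∀ d (a : ℕ → L), Tmap σ a d ≠ 0 →
      Module.finrank F (LinearMap.ker (Tmap σ a d)) < d := by
  intro d
  induction d with
  | zero => intro a hP; exact absurd (by simp [Tmap]) hP
  | succ d ih =>
    intro a hP
    by_cases hker : LinearMap.ker (Tmap σ a (d + 1)) = ⊥
    · rw [hker, finrank_bot]; omega
    · obtain ⟨y, hyk, hy0⟩ := (Submodule.ne_bot_iff _).1 hker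
      set α := σ y * y⁻¹ with hα
      have hσy : σ y = α * y := by rw [hα, mul_assoc, inv_mul_cancel₀ hy0, mul_one]
      set q : ℕ → L := fun k =>
        ∑ i ∈ Ico (k + 1) (d + 1), a i * ∏ j ∈ Ico (k + 1) i, (σ ^ j) α with hq
      have hqd : q d = 0 := by simp [hq]
      have hrec : ∀ k, k < d → q k = a (k + 1) + q (k + 1) * (σ ^ (k + 1)) α := by
        intro k hk
        show (∑ i ∈ Ico (k + 1) (d + 1), a i * ∏ j ∈ Ico (k + 1) i, (σ ^ j) α)
            = a (k + 1) + (∑ i ∈ Ico (k + 1 + 1) (d + 1), a i * ∏ j ∈ Ico (k + 1 + 1) i, (σ ^ j) α)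
              * (σ ^ (k + 1)) α
        rw [Finset.sum_eq_sum_Ico_succ_bot (by omega : k + 1 < d + 1)]
        congr 1
        · simp
        · rw [Finset.sum_mul]
          refine Finset.sum_congr rfl fun i hi => ?_
          rw [Finset.mem_Ico] at hi
          rw [mul_assoc]
          congr 1
          rw [Finset.prod_eq_prod_Ico_succ_bot (show k + 1 < i by omega)]
          ring
      have hid : ∀ x, Tmap σ a (d + 1) x
          = Tmap σ q d (σ x - α * x) + (a 0 + q 0 * α) * x := by
        intro x
        have key : ∀ k ∈ Finset.range d,
            q k * (σ ^ k) (σ x - α * x)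
              = a (k + 1) * (σ ^ (k + 1)) x
                + (q (k + 1) * (σ ^ (k + 1)) α * (σ ^ (k + 1)) x
                    - q k * (σ ^ k) α * (σ ^ k) x) := by
          intro k hk
          rw [Finset.mem_range] at hk
          have h1 : (σ ^ k) (σ x - α * x) = (σ ^ (k + 1)) x - (σ ^ k) α * (σ ^ k) x := by
            simp [pow_succ, map_sub, map_mul, AlgEquiv.mul_apply]
          rw [h1, hrec k hk]
          ring
        rw [Tmap_apply, Tmap_apply, Finset.sum_congr rfl key, Finset.sum_add_distrib,
          Finset.sum_range_sub (fun k => q k * (σ ^ k) α * (σ ^ k) x),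
          Finset.sum_range_succ' (fun k => a k * (σ ^ k) x) d, hqd]
        simp only [pow_zero, AlgEquiv.one_apply, zero_mul]
        ring
      have hPy : Tmap σ a (d + 1) y = 0 := hyk
      have hDy : σ y - α * y = 0 := by rw [hσy]; ring
      have hr : a 0 + q 0 * α = 0 := by
        have h := hid y
        rw [hPy, hDy, map_zero, zero_add] at h
        exact (mul_eq_zero.1 h.symm).resolve_right hy0
      set D : L →ₗ[F] L := σ.toLinearMap - α • LinearMap.id with hD
      have hDapp : ∀ x, D x = σ x - α * x := by
        intro x
        simp [hD, smul_eq_mul]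
      have hcomp : Tmap σ a (d + 1) = (Tmap σ q d).comp D := by
        ext x
        rw [LinearMap.comp_apply, hDapp, hid, hr, zero_mul, add_zero]
      have hkerD : finrank F (LinearMap.ker D) ≤ 1 := by
        have hle : LinearMap.ker D ≤ Submodule.span F {y} := by
          intro x hx
          have hx0 : σ x - α * x = 0 := by rw [← hDapp]; exact hx
          have hx' : σ x = α * x := by linear_combination hx0
          have hσy0 : σ y ≠ 0 := fun h => hy0 (σ.injective (by rw [h, map_zero]))
          have hα0 : α ≠ 0 := mul_ne_zero hσy0 (inv_ne_zero hy0)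
          have hfixed : σ (x * y⁻¹) = x * y⁻¹ := by
            rw [map_mul, map_inv₀, hx', hσy, mul_inv, ← mul_assoc]
            congr 1
            rw [mul_comm α x, mul_assoc, mul_inv_cancel₀ hα0, mul_one]
          obtain ⟨f, hf⟩ := hfix _ hfixed
          rw [Submodule.mem_span_singleton]
          refine ⟨f, ?_⟩
          rw [Algebra.smul_def, hf]
          field_simp
        calc finrank F (LinearMap.ker D)
            ≤ finrank F (Submodule.span F ({y} : Set L)) := Submodule.finrank_mono hle
          _ = 1 := finrank_span_singleton hy0
      by_cases hQ : Tmap σ q d = 0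
      · exact absurd (by rw [hcomp, hQ, LinearMap.zero_comp]) hP
      · have h1 := ih q hQ
        have h2 : LinearMap.ker (Tmap σ a (d + 1))
            = (LinearMap.ker (Tmap σ q d)).comap D := by
          rw [hcomp, LinearMap.ker_comp]
        rw [h2]
        have h3 := finrank_comap_le D (LinearMap.ker (Tmap σ q d))
        omega

end Gabidulin

/-- Gabidulin codes are MRD: if `L/F` is cyclic of degree `n` generated by `σ` and the
coordinates of `c₀` form an `F`-basis `b` of `L`, then the `L`-span of
`c₀, σ(c₀), ..., σ^{d-1}(c₀)` has dimension `d` and every nonzero codeword has rank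
weight at least `n - d + 1`. -/
theorem stmt_13 (F L : Type*) [Field F] [Field L] [Algebra F L] [FiniteDimensional F L]
    (n : ℕ) (hn : Module.finrank F L = n)
    (σ : L ≃ₐ[F] L) (hσ : orderOf σ = n)
    (hgen : ∀ τ : L ≃ₐ[F] L, τ ∈ Subgroup.zpowers σ)
    (b : Basis (Fin n) F L) (d : ℕ) (hd : 0 < d) (hdn : d ≤ n) :
    Module.finrank L (Submodule.span L
        (Set.range fun k : Fin d => fun j => (σ ^ (k : ℕ)) (b j))) = d ∧
    ∀ c ∈ Submodule.span L (Set.range fun k : Fin d => fun j => (σ ^ (k : ℕ)) (b j)),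
      c ≠ 0 → n - d + 1 ≤ Module.finrank F (Submodule.span F (Set.range c)) := by
  classical
  have hn0 : 0 < n := lt_of_lt_of_le hd hdn
  have htop : Subgroup.zpowers σ = ⊤ := by
    rw [eq_top_iff]; exact fun τ _ => hgen τ
  have hcard : Fintype.card (L ≃ₐ[F] L) = n := by
    rw [← Nat.card_eq_fintype_card, ← Subgroup.card_top, ← htop, Nat.card_zpowers, hσ]
  -- every element fixed by σ is in F
  have hfix : ∀ x : L, σ x = x → ∃ f : F, algebraMap F L f = x := by
    intro x hx
    have hnat : ∀ m : ℕ, (σ ^ m) x = x := by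
      intro m
      induction m with
      | zero => simp
      | succ m ihm =>
        rw [pow_succ, AlgEquiv.mul_apply, hx, ihm]
    have hall : ∀ τ : L ≃ₐ[F] L, τ x = x := by
      intro τ
      obtain ⟨m, hm⟩ := Subgroup.mem_zpowers_iff.1 (hgen τ)
      rw [← hm]
      cases m with
      | ofNat m => simpa using hnat m
      | negSucc m =>
        rw [zpow_negSucc]
        have h := hnat (m + 1)
        apply (σ ^ (m + 1)).injective
        rw [← AlgEquiv.mul_apply, mul_inv_cancel, AlgEquiv.one_apply, h]
    have hK : IntermediateField.fixedField (⊤ : Subgroup (L ≃ₐ[F] L)) = ⊥ := by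
      rw [← IntermediateField.finrank_eq_one_iff]
      have h1 : finrank (IntermediateField.fixedField (⊤ : Subgroup (L ≃ₐ[F] L))) L
          = Fintype.card (⊤ : Subgroup (L ≃ₐ[F] L)) := by
        rw [IntermediateField.finrank_fixedField_eq_card]; exact Nat.card_eq_fintype_card
      have h2 : Fintype.card (⊤ : Subgroup (L ≃ₐ[F] L)) = n := by
        rw [← Nat.card_eq_fintype_card, Subgroup.card_top, Nat.card_eq_fintype_card, hcard]
      have h3 := Module.finrank_mul_finrank F
        (IntermediateField.fixedField (⊤ : Subgroup (L ≃ₐ[F] L))) L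
      rw [h1, h2, hn] at h3
      exact Nat.eq_of_mul_eq_mul_right hn0 (by omega)
    have hxK : x ∈ IntermediateField.fixedField (⊤ : Subgroup (L ≃ₐ[F] L)) := by
      intro g
      exact hall g.1
    rw [hK, IntermediateField.mem_bot] at hxK
    obtain ⟨f, hf⟩ := hxK
    exact ⟨f, hf⟩
  -- linear independence of the rows
  have hindep : LinearIndependent L
      (fun k : Fin d => fun j => (σ ^ (k : ℕ)) (b j) : Fin d → Fin n → L) := by
    rw [Fintype.linearIndependent_iff]
    intro g hg
    have hS : (∑ k : Fin d, g k • (σ ^ (k : ℕ)).toLinearMap : L →ₗ[F] L) = 0 := by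
      apply b.ext
      intro j
      have h := congrFun hg j
      simpa [Finset.sum_apply, smul_eq_mul] using h
    have hmon : LinearIndependent L
        (fun k : Fin d => ((σ ^ (k : ℕ)).toAlgHom.toRingHom.toMonoidHom : L → L)) := by
      apply (linearIndependent_monoidHom L L).comp
      intro k k' h
      have hfun : (σ ^ (k : ℕ) : L ≃ₐ[F] L) = σ ^ (k' : ℕ) := by
        ext x
        exact congrFun (congrArg (fun (f : L →* L) => (f : L → L)) h) x
      have hk : (k : ℕ) ∈ Set.Iio (orderOf σ) := by rw [hσ]; exact lt_of_lt_of_le k.2 hdn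
      have hk' : (k' : ℕ) ∈ Set.Iio (orderOf σ) := by rw [hσ]; exact lt_of_lt_of_le k'.2 hdn
      exact Fin.ext (pow_injOn_Iio_orderOf hk hk' hfun)
    rw [Fintype.linearIndependent_iff] at hmon
    apply hmon g
    funext x
    have h := congrArg (fun (S : L →ₗ[F] L) => S x) hS
    simpa [Finset.sum_apply, smul_eq_mul] using h
  constructor
  · rw [finrank_span_eq_card hindep, Fintype.card_fin]
  · intro c hc hc0
    obtain ⟨g, hg⟩ := (mem_span_range_iff_exists_fun L).1 hc
    set a : ℕ → L := fun k => if h : k < d then g ⟨k, h⟩ else 0 with ha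
    set P := Tmap σ a d with hPdef
    have hcj : ∀ j, c j = P (b j) := by
      intro j
      rw [Tmap_apply]
      rw [← hg]
      rw [Finset.sum_apply]
      rw [Finset.sum_range]
      apply Finset.sum_congr rfl
      intro k _
      simp [ha, smul_eq_mul]
    have hcP : c = ⇑P ∘ ⇑b := funext hcj
    have hspan : Submodule.span F (Set.range c) = LinearMap.range P := by
      rw [hcP, Set.range_comp, Submodule.span_image, Basis.span_eq, Submodule.map_top]
    have hP0 : P ≠ 0 := by
      intro h
      apply hc0
      funext j
      rw [hcj j, h]
      rfl
    have hker : finrank F (LinearMap.ker P) < d := kerA σ hfix d a hP0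
    have hrn := P.finrank_range_add_finrank_ker
    rw [hn] at hrn
    rw [hspan]
    omega
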